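/- Let p, q, i, j be natural numbers with i ≤ p, 2 ≤ j ≤ q, (i+1)·(q+1) ≥ j·(p+1) + 1, and q + 2 ≥ j + j·(j−1)·(i+1). Then C(p,i)·C(q,j) ≥ C(p,i+1)·C(q,j−1) + C(p,i)·C(q,j−2); equivalently, |X_{i,j}| − |X_{i+1,j−1}| ≥ |X_{i,j−2}|. -/
import Mathlib


/-- Under the stated conditions on `i, j, p, q`, one has
`|X_{i,j}| - |X_{i+1,j-1}| ≥ |X_{i,j-2}|`, i.e.
`C(p,i)*C(q,j) ≥ C(p,i+1)*C(q,j-1) + C(p,i)*C(q,j-2)`. -/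
theorem stmt_10 (p q i j : ℕ) (hip : i ≤ p) (hj2 : 2 ≤ j) (hjq : j ≤ q)
    (hgap : (i + 1) * (q + 1) ≥ j * (p + 1) + 1)
    (hbig : q + 2 ≥ j + j * (j - 1) * (i + 1)) :
    Nat.choose p (i + 1) * Nat.choose q (j - 1) + Nat.choose p i * Nat.choose q (j - 2) ≤
      Nat.choose p i * Nat.choose q j := by
  obtain ⟨m, rfl⟩ := Nat.exists_eq_add_of_le hip
  obtain ⟨s, rfl⟩ := Nat.exists_eq_add_of_le hj2
  obtain ⟨r, rfl⟩ := Nat.exists_eq_add_of_le hjq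
  rw [show 2 + s - 1 = s + 1 from by omega, show 2 + s - 2 = s from by omega] at *
  -- key numeric inequality
  have h1 : (s + 2) * m + 1 ≤ (i + 1) * (r + 1) := by nlinarith [hgap]
  have h2 : (s + 2) * (s + 1) * (i + 1) ≤ r + 2 := by nlinarith [hbig]
  have key : (s + 2) * m * (r + 2) + (s + 2) * (s + 1) * (i + 1) ≤ (i + 1) * (r + 1) * (r + 2) := by
    have := Nat.mul_le_mul_right (r + 2) h1
    nlinarith [this, h2]
  -- choose identities
  have h3 := Nat.choose_succ_right_eq (i + m) i
  rw [show i + m - i = m from by omega] at h3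
  have h4 := Nat.choose_succ_right_eq (2 + s + r) (s + 1)
  rw [show 2 + s + r - (s + 1) = r + 1 from by omega] at h4
  have h5 := Nat.choose_succ_right_eq (2 + s + r) s
  rw [show 2 + s + r - s = r + 2 from by omega] at h5
  have hpos : 0 < (i + 1) * ((r + 1) * (r + 2)) := by positivity
  apply Nat.le_of_mul_le_mul_right _ hpos
  have expand :
      ((i + m).choose (i + 1) * (2 + s + r).choose (s + 1)
          + (i + m).choose i * (2 + s + r).choose s) * ((i + 1) * ((r + 1) * (r + 2)))
      = ((i + m).choose (i + 1) * (i + 1)) * ((2 + s + r).choose (s + 1) * (r + 1)) * (r + 2)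
        + (i + m).choose i * ((2 + s + r).choose s * (r + 2)) * ((i + 1) * (r + 1)) := by ring
  rw [expand, h3, ← h4, ← h5]
  have expand2 :
      (i + m).choose i * m * ((2 + s + r).choose (s + 2) * (s + 2)) * (r + 2)
        + (i + m).choose i * ((2 + s + r).choose (s + 1) * (s + 1)) * ((i + 1) * (r + 1))
      = (i + m).choose i * m * ((2 + s + r).choose (s + 2) * (s + 2)) * (r + 2)
        + (i + m).choose i * ((2 + s + r).choose (s + 1) * (r + 1)) * ((s + 1) * (i + 1)) := by
    ring
  rw [expand2, ← h4]
  calc (i + m).choose i * m * ((2 + s + r).choose (s + 2) * (s + 2)) * (r + 2)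
        + (i + m).choose i * ((2 + s + r).choose (s + 2) * (s + 2)) * ((s + 1) * (i + 1))
      = (i + m).choose i * (2 + s + r).choose (s + 2)
          * ((s + 2) * m * (r + 2) + (s + 2) * (s + 1) * (i + 1)) := by ring
    _ ≤ (i + m).choose i * (2 + s + r).choose (s + 2) * ((i + 1) * (r + 1) * (r + 2)) :=
        Nat.mul_le_mul_left _ key
    _ = (i + m).choose i * (2 + s + r).choose (2 + s) * ((i + 1) * ((r + 1) * (r + 2))) := by
        rw [show 2 + s = s + 2 from by omega]; ring
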